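/- Let (μ,p) and (ν,q) be core outcomes of a two-sided matching market with budget-constrained bidders. If π_i(μ(i),p) ≥ π_i(ν(i),q) for all bidders i, then Σ_{i∈B} v_i(μ(i)) ≥ Σ_{i∈B} v_i(ν(i)). -/

import Mathlib

open scoped Classical

/-- Goods are indexed by `Fin (m+1)`; good `0` is the dummy good. -/
abbrev Good (m : ℕ) : Type := Fin (m + 1)

/-- Utility `π_i(j,p)`: `v_i(j) - p(j)` if `p(j) ≤ b^i`, and `-∞` otherwise. -/
noncomputable def util {n m : ℕ} (v : Fin n → Good m → ℕ) (b : Fin n → ℕ)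
    (p : Good m → ℝ) (i : Fin n) (j : Good m) : WithBot ℝ :=
  if p j ≤ (b i : ℝ) then (((v i j : ℝ) - p j : ℝ) : WithBot ℝ) else ⊥

/-- An assignment: each non-dummy good is assigned to at most one bidder. -/
def IsAssignment {n m : ℕ} (μ : Fin n → Good m) : Prop :=
  ∀ j : Good m, j ≠ 0 → ∀ i i' : Fin n, μ i = j → μ i' = j → i = i'

/-- A price vector: nonnegative prices with `p(0) = 0`. -/
def IsPriceVec {m : ℕ} (p : Good m → ℝ) : Prop :=
  p 0 = 0 ∧ ∀ j, 0 ≤ p j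

/-- An outcome: an assignment together with a price vector such that no budget is
violated and every positively priced good is assigned to exactly one bidder. -/
def IsOutcome {n m : ℕ} (b : Fin n → ℕ) (μ : Fin n → Good m) (p : Good m → ℝ) : Prop :=
  IsAssignment μ ∧ IsPriceVec p ∧ (∀ i, p (μ i) ≤ (b i : ℝ)) ∧
    ∀ j : Good m, 0 < p j → ∃! i, μ i = j

/-- A blocking pair `(i,j)`: `π_i(j,p) > π_i(μ(i),p)` and `p(j) < b^i`. -/
def IsBlockingPair {n m : ℕ} (v : Fin n → Good m → ℕ) (b : Fin n → ℕ)
    (μ : Fin n → Good m) (p : Good m → ℝ) (i : Fin n) (j : Good m) : Prop :=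
  util v b p i (μ i) < util v b p i j ∧ p j < (b i : ℝ)

/-- A core outcome: an outcome with no blocking pairs. -/
def IsCore {n m : ℕ} (v : Fin n → Good m → ℕ) (b : Fin n → ℕ)
    (μ : Fin n → Good m) (p : Good m → ℝ) : Prop :=
  IsOutcome b μ p ∧ ∀ i j, ¬ IsBlockingPair v b μ p i j

lemma sum_price_le_aux {n m : ℕ} {σ : Fin n → Good m} {p : Good m → ℝ}
    (hA : IsAssignment σ) (hP : IsPriceVec p) :
    ∑ i, p (σ i) ≤ ∑ j, p j := by
  classical
  have h1 : ∑ i ∈ Finset.univ.filter (fun i => σ i ≠ 0), p (σ i) = ∑ i, p (σ i) := by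
    refine Finset.sum_filter_of_ne ?_
    intro i _ hne h0
    exact hne (by rw [h0, hP.1])
  have h2 : ∑ j ∈ (Finset.univ.filter (fun i => σ i ≠ 0)).image σ, p j
      = ∑ i ∈ Finset.univ.filter (fun i => σ i ≠ 0), p (σ i) := by
    refine Finset.sum_image ?_
    intro x hx y hy hxy
    simp only [Finset.mem_coe, Finset.mem_filter] at hx
    exact hA (σ y) (hxy ▸ hx.2) x y hxy rfl
  calc ∑ i, p (σ i) = ∑ j ∈ (Finset.univ.filter (fun i => σ i ≠ 0)).image σ, p j := by
        rw [h2, h1]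
    _ ≤ ∑ j, p j := Finset.sum_le_sum_of_subset_of_nonneg (Finset.subset_univ _)
        (fun j _ _ => hP.2 j)

lemma sum_price_eq_aux {n m : ℕ} {σ : Fin n → Good m} {p : Good m → ℝ}
    (hA : IsAssignment σ) (hP : IsPriceVec p)
    (hpos : ∀ j : Good m, 0 < p j → ∃ i, σ i = j) :
    ∑ i, p (σ i) = ∑ j, p j := by
  classical
  have h1 : ∑ i ∈ Finset.univ.filter (fun i => σ i ≠ 0), p (σ i) = ∑ i, p (σ i) := by
    refine Finset.sum_filter_of_ne ?_
    intro i _ hne h0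
    exact hne (by rw [h0, hP.1])
  have h2 : ∑ j ∈ (Finset.univ.filter (fun i => σ i ≠ 0)).image σ, p j
      = ∑ i ∈ Finset.univ.filter (fun i => σ i ≠ 0), p (σ i) := by
    refine Finset.sum_image ?_
    intro x hx y hy hxy
    simp only [Finset.mem_coe, Finset.mem_filter] at hx
    exact hA (σ y) (hxy ▸ hx.2) x y hxy rfl
  have h3 : ∑ j ∈ (Finset.univ.filter (fun i => σ i ≠ 0)).image σ, p j = ∑ j, p j := by
    refine Finset.sum_subset (Finset.subset_univ _) ?_
    intro j _ hj
    by_contra hne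
    have hjpos : 0 < p j := lt_of_le_of_ne (hP.2 j) (Ne.symm hne)
    obtain ⟨i, hi⟩ := hpos j hjpos
    have hj0 : j ≠ 0 := by
      intro h0; rw [h0, hP.1] at hjpos; exact lt_irrefl _ hjpos
    exact hj (Finset.mem_image.mpr ⟨i, Finset.mem_filter.mpr ⟨Finset.mem_univ _, hi ▸ hj0⟩, hi⟩)
  rw [← h1, ← h2, h3]

/-- If `(μ,p)` and `(ν,q)` are core outcomes and every bidder is weakly
better off under `(μ,p)`, then `(μ,p)` generates at least as much welfare as `(ν,q)`. -/
theorem welfare_le_of_utility_dominating_core {n m : ℕ}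
    (v : Fin n → Good m → ℕ) (b : Fin n → ℕ)
    (hv0 : ∀ i, v i 0 = 0) (hb : ∀ i, 0 < b i)
    (μ : Fin n → Good m) (p : Good m → ℝ)
    (ν : Fin n → Good m) (q : Good m → ℝ)
    (hcore₁ : IsCore v b μ p) (hcore₂ : IsCore v b ν q)
    (hdom : ∀ i, util v b q i (ν i) ≤ util v b p i (μ i)) :
    ∑ i, v i (ν i) ≤ ∑ i, v i (μ i) := by
  classical
  have hpμ : ∀ i, p (μ i) ≤ (b i : ℝ) := hcore₁.1.2.2.1
  have hqν : ∀ i, q (ν i) ≤ (b i : ℝ) := hcore₂.1.2.2.1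
  -- key per-bidder inequality with prices p on both sides
  have key : ∀ i : Fin n, ((v i (ν i) : ℝ) - p (ν i)) ≤ ((v i (μ i) : ℝ) - p (μ i)) := by
    intro i
    by_cases h : q (ν i) ≤ p (ν i)
    · have hd := hdom i
      rw [util, util, if_pos (hqν i), if_pos (hpμ i)] at hd
      have h2 : (v i (ν i) : ℝ) - q (ν i) ≤ (v i (μ i) : ℝ) - p (μ i) := by
        exact_mod_cast hd
      linarith
    · push_neg at h
      have hpb : p (ν i) < (b i : ℝ) := lt_of_lt_of_le h (hqν i)
      have hnb := hcore₁.2 i (ν i)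
      rw [IsBlockingPair] at hnb
      push_neg at hnb
      have h3 : ¬ (util v b p i (μ i) < util v b p i (ν i)) := fun hlt => absurd (hnb hlt) (not_le.mpr hpb)
      rw [not_lt, util, util, if_pos (hpμ i), if_pos (le_of_lt hpb)] at h3
      exact_mod_cast h3
  have hsum : ∑ i, ((v i (ν i) : ℝ) - p (ν i)) ≤ ∑ i, ((v i (μ i) : ℝ) - p (μ i)) :=
    Finset.sum_le_sum fun i _ => key i
  rw [Finset.sum_sub_distrib, Finset.sum_sub_distrib] at hsum
  have hμeq : ∑ i, p (μ i) = ∑ j, p j :=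
    sum_price_eq_aux hcore₁.1.1 hcore₁.1.2.1 (fun j hj => (hcore₁.1.2.2.2 j hj).exists)
  have hνle : ∑ i, p (ν i) ≤ ∑ j, p j := sum_price_le_aux hcore₂.1.1 hcore₁.1.2.1
  have hreal : (∑ i, (v i (ν i) : ℝ)) ≤ ∑ i, (v i (μ i) : ℝ) := by linarith
  exact_mod_cast hreal
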